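/- Let A be a multiplicative character of F_q^× and x ∈ F_q with x ≠ 1. Then the Gaussian hypergeometric function 2F1(A, A⁻¹; ε | x) equals 2F1(A⁻¹, A; ε | x). -/

import Mathlib

/-- Greene's Gaussian hypergeometric function `₂F₁(A,B;C|x)` over a finite field `F`:
`₂F₁(A,B;C|x) = ε(x)·(BC(-1)/q)·Σ_{y∈F} B(y)·(B̄C)(1-y)·Ā(1-xy)`,
where characters are extended by `χ 0 = 0`, `ε` is the trivial character and `χ̄ = χ⁻¹`. -/
noncomputable def hyp2F1 {F : Type*} [Field F] [Fintype F]
    (A B C : MulChar F ℂ) (x : F) : ℂ :=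
  (1 : MulChar F ℂ) x * ((B * C) (-1) / (Fintype.card F : ℂ)) *
    ∑ y : F, B y * (B⁻¹ * C) (1 - y) * A⁻¹ (1 - x * y)

private lemma mulchar_ne_zero {F : Type*} [Field F] (A : MulChar F ℂ) {u : F} (hu : u ≠ 0) :
    A u ≠ 0 := by
  have h : A u * A u⁻¹ = 1 := by
    rw [← map_mul, mul_inv_cancel₀ hu, map_one]
  exact left_ne_zero_of_mul_eq_one h

private lemma mulchar_inv_val {F : Type*} [Field F] (A : MulChar F ℂ) {u : F} (hu : u ≠ 0) :
    A u⁻¹ = (A u)⁻¹ := by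
  have h : A u * A u⁻¹ = 1 := by
    rw [← map_mul, mul_inv_cancel₀ hu, map_one]
  field_simp [mulchar_ne_zero A hu] at h ⊢
  linear_combination h

/-- For a multiplicative character `A` of a finite field `F` and `x ≠ 1`,
`₂F₁(A, A⁻¹; ε | x) = ₂F₁(A⁻¹, A; ε | x)`. -/
theorem hyp2F1_inv_swap {F : Type*} [Field F] [Fintype F] (A : MulChar F ℂ) (x : F)
    (hx : x ≠ 1) :
    hyp2F1 A A⁻¹ 1 x = hyp2F1 A⁻¹ A 1 x := by
  classical
  have h1x : (1 : F) - x ≠ 0 := sub_ne_zero.mpr (Ne.symm hx)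
  unfold hyp2F1
  simp only [mul_one, inv_inv]
  have hneg : A⁻¹ (-1) = A (-1) := by
    have h2 : A (-1) * A (-1) = 1 := by
      rw [← map_mul]; norm_num
    rw [MulChar.inv_apply_eq_inv' A (-1)]
    exact inv_eq_of_mul_eq_one_left h2
  rw [hneg]
  congr 1
  -- now the sums
  set f : F → F := fun y => if 1 - x * y = 0 then y else (1 - y) / (1 - x * y) with hf
  have hinv : Function.Involutive f := by
    intro y
    by_cases hu : 1 - x * y = 0
    · simp [hf, hu]
    · have h1 : f y = (1 - y) / (1 - x * y) := if_neg hu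
      have h2 : 1 - x * f y = (1 - x) / (1 - x * y) := by
        rw [h1]; field_simp; ring
      have h2ne : 1 - x * f y ≠ 0 := by
        rw [h2]; exact div_ne_zero h1x hu
      have h4 : f (f y) = (1 - f y) / (1 - x * f y) := if_neg h2ne
      rw [h4, h2, h1]
      field_simp
      have hu' : 1 - y * x ≠ 0 := by rwa [mul_comm] at hu
      field_simp
      ring
  refine Fintype.sum_equiv hinv.toPerm _ _ ?_
  intro y
  simp only [Function.Involutive.coe_toPerm]
  by_cases hu : 1 - x * y = 0
  · have hfy : f y = y := by simp [hf, hu]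
    rw [hfy, hu]
    simp [MulChar.inv_apply_eq_inv', MulChar.map_zero]
  · have h1 : f y = (1 - y) / (1 - x * y) := by simp [hf, hu]
    set u : F := 1 - x * y with hudef
    have h2 : 1 - f y = y * (1 - x) / u := by
      rw [h1]; field_simp; ring
    have h3 : 1 - x * f y = (1 - x) / u := by
      rw [h1]; field_simp; ring
    rw [h1] at h2 h3
    rw [h1, h2, h3]
    have hAu : A u ≠ 0 := mulchar_ne_zero A hu
    have hA1x : A (1 - x) ≠ 0 := mulchar_ne_zero A h1x
    simp only [MulChar.inv_apply_eq_inv', div_eq_mul_inv, map_mul,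
      mulchar_inv_val A hu]
    field_simp
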